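/- Let λ_1 < ⋯ < λ_N be distinct positive integers with max_{0≤x≤2π} |∑_{j=1}^N sin(λ_j x)| = S. Then for any positive integer M, the number of indices j with λ_j ≤ M is at most C·S·(1 + log M) for an absolute constant C > 0. -/

import Mathlib

open Real


noncomputable def DK (M : ℕ) (x : ℝ) : ℝ := ∑ k ∈ Finset.Icc 1 M, Real.sin (k * x)

lemma DK_closed (M : ℕ) (x : ℝ) :
    DK M x * Real.sin (x/2) = Real.sin (M * x / 2) * Real.sin ((M+1) * x / 2) := by
  induction M with
  | zero => simp [DK]
  | succ M ih =>
    rw [DK, Finset.sum_Icc_succ_top (by omega : 1 ≤ M + 1), add_mul, ← DK, ih]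
    push_cast
    rw [show (M:ℝ) * x / 2 = (M+1) * (x/2) - x/2 by ring,
        show ((M:ℝ)+1) * x / 2 = (M+1) * (x/2) by ring,
        show ((M:ℝ)+1+1) * x / 2 = (M+1) * (x/2) + x/2 by ring,
        show ((M:ℝ)+1) * x = 2 * ((M+1) * (x/2)) by ring,
        Real.sin_sub, Real.sin_add, Real.sin_two_mul]
    ring

lemma DK_cont (M : ℕ) : Continuous (DK M) := by
  apply continuous_finset_sum
  exact fun k _ => Real.continuous_sin.comp (continuous_const.mul continuous_id)

lemma abs_DK_le_card (M : ℕ) (x : ℝ) : |DK M x| ≤ M := by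
  calc |DK M x| ≤ ∑ k ∈ Finset.Icc 1 M, |Real.sin (k * x)| := Finset.abs_sum_le_sum_abs _ _
    _ ≤ ∑ k ∈ Finset.Icc 1 M, 1 := Finset.sum_le_sum (fun k _ => Real.abs_sin_le_one _)
    _ = M := by simp

lemma abs_DK_le (M : ℕ) {x : ℝ} (hx0 : 0 < x) (hxp : x ≤ π) : |DK M x| ≤ π / x := by
  have hs : Real.sin (x/2) > 0 := by
    apply Real.sin_pos_of_pos_of_lt_pi (by linarith)
    linarith [Real.pi_gt_three]
  have hsx : x / π ≤ Real.sin (x/2) := by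
    simpa using Real.mul_le_sin (x := x/2) (by positivity) (by linarith)
  have h1 : |DK M x| ≤ 1 / Real.sin (x/2) := by
    rw [le_div_iff₀ hs, ← abs_of_pos hs, ← abs_mul, DK_closed]
    calc |Real.sin (M * x / 2) * Real.sin ((M+1) * x / 2)| ≤ 1 * 1 := by
          rw [abs_mul]
          exact mul_le_mul (Real.abs_sin_le_one _) (Real.abs_sin_le_one _) (abs_nonneg _) zero_le_one
      _ = 1 := by ring
  refine h1.trans ?_
  rw [div_le_div_iff₀ hs (by positivity : (0:ℝ) < x)]
  have := (div_le_iff₀ Real.pi_pos).mp hsx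
  nlinarith [Real.pi_pos]

lemma DK_symm (M : ℕ) (x : ℝ) : DK M (2*π - x) = - DK M x := by
  unfold DK
  rw [← Finset.sum_neg_distrib]
  refine Finset.sum_congr rfl fun k _ => ?_
  simpa [mul_sub] using Real.sin_nat_mul_two_pi_sub ((k:ℝ)*x) k

lemma DK_L1 (M : ℕ) (hM : 1 ≤ M) :
    ∫ x in (0:ℝ)..(2*π), |DK M x| ≤ 2*π*(1 + Real.log M) := by
  have hMR : (1:ℝ) ≤ M := by exact_mod_cast hM
  have hMpos : (0:ℝ) < M := by linarith
  set δ : ℝ := π / M with hδ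
  have hδpos : 0 < δ := by positivity
  have hδle : δ ≤ π := by
    rw [hδ, div_le_iff₀ hMpos]; nlinarith [Real.pi_pos]
  have hInt : ∀ a b : ℝ, IntervalIntegrable (fun x => |DK M x|) MeasureTheory.volume a b :=
    fun a b => ((DK_cont M).abs).intervalIntegrable a b
  have hsplit2 : ∫ x in (0:ℝ)..(2*π), |DK M x| =
      (∫ x in (0:ℝ)..π, |DK M x|) + ∫ x in π..(2*π), |DK M x| :=
    (intervalIntegral.integral_add_adjacent_intervals (hInt 0 π) (hInt π (2*π))).symm
  have hsym : ∫ x in π..(2*π), |DK M x| = ∫ x in (0:ℝ)..π, |DK M x| := by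
    have := intervalIntegral.integral_comp_sub_left (a := (0:ℝ)) (b := π)
      (fun x => |DK M x|) (2*π)
    simp only [show 2*π - π = π by ring, show 2*π - 0 = 2*π by ring] at this
    rw [← this]
    apply intervalIntegral.integral_congr
    intro x _
    simp [DK_symm]
  have hsplit1 : ∫ x in (0:ℝ)..π, |DK M x| =
      (∫ x in (0:ℝ)..δ, |DK M x|) + ∫ x in δ..π, |DK M x| :=
    (intervalIntegral.integral_add_adjacent_intervals (hInt 0 δ) (hInt δ π)).symm
  have h1 : ∫ x in (0:ℝ)..δ, |DK M x| ≤ π := by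
    have : ∫ x in (0:ℝ)..δ, |DK M x| ≤ ∫ x in (0:ℝ)..δ, (M:ℝ) := by
      apply intervalIntegral.integral_mono_on hδpos.le (hInt 0 δ)
        (intervalIntegrable_const)
      exact fun x _ => abs_DK_le_card M x
    rw [intervalIntegral.integral_const, smul_eq_mul, sub_zero] at this
    calc ∫ x in (0:ℝ)..δ, |DK M x| ≤ δ * M := this
      _ = π := by rw [hδ, div_mul_cancel₀ _ (ne_of_gt hMpos)]
  have h2 : ∫ x in δ..π, |DK M x| ≤ π * Real.log M := by
    have hInt2 : IntervalIntegrable (fun x => π * (1/x)) MeasureTheory.volume δ π := by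
      apply ContinuousOn.intervalIntegrable
      apply continuousOn_const.mul (continuousOn_const.div continuousOn_id ?_)
      intro x hx
      rw [Set.uIcc_of_le hδle] at hx
      exact ne_of_gt (lt_of_lt_of_le hδpos hx.1)
    have hle : ∫ x in δ..π, |DK M x| ≤ ∫ x in δ..π, π * (1/x) := by
      apply intervalIntegral.integral_mono_on hδle (hInt δ π) hInt2
      intro x hx
      have hx0 : 0 < x := lt_of_lt_of_le hδpos hx.1
      have := abs_DK_le M hx0 hx.2
      rw [mul_one_div]
      exact this
    rw [intervalIntegral.integral_const_mul, integral_one_div] at hle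
    · rw [show π / δ = (M:ℝ) by rw [hδ]; field_simp] at hle
      exact hle
    · rw [Set.uIcc_of_le hδle]
      intro h
      exact absurd h.1 (not_le.mpr hδpos)
  calc ∫ x in (0:ℝ)..(2*π), |DK M x|
      = 2 * ∫ x in (0:ℝ)..π, |DK M x| := by rw [hsplit2, hsym]; ring
    _ ≤ 2 * (π + π * Real.log M) := by
        rw [hsplit1]; linarith
    _ = 2*π*(1 + Real.log M) := by ring

lemma integral_cos_int_mul (k : ℤ) (hk : k ≠ 0) :
    ∫ x in (0:ℝ)..(2*π), Real.cos (k * x) = 0 := by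
  have hkR : (k:ℝ) ≠ 0 := Int.cast_ne_zero.mpr hk
  rw [intervalIntegral.integral_comp_mul_left Real.cos hkR, integral_cos]
  have h1 : Real.sin ((k:ℝ) * (2*π)) = 0 := by
    have := Real.sin_int_mul_pi (2*k)
    push_cast at this
    rw [show (k:ℝ)*(2*π) = 2*(k:ℝ)*π by ring]
    exact this
  simp [h1]

lemma orth (a b : ℕ) (ha : 1 ≤ a) (hb : 1 ≤ b) :
    ∫ x in (0:ℝ)..(2*π), Real.sin (a*x) * Real.sin (b*x) = if a = b then π else 0 := by
  have key : ∀ x : ℝ, Real.sin (a*x) * Real.sin (b*x)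
      = (Real.cos (((a:ℝ)-b)*x) - Real.cos (((a:ℝ)+b)*x))/2 := by
    intro x
    rw [sub_mul, add_mul, Real.cos_sub, Real.cos_add]
    ring
  rw [intervalIntegral.integral_congr (fun x _ => key x)]
  have hc1 : IntervalIntegrable (fun x : ℝ => Real.cos (((a:ℝ)-b)*x))
      MeasureTheory.volume 0 (2*π) :=
    (Real.continuous_cos.comp (continuous_const.mul continuous_id)).intervalIntegrable _ _
  have hc2 : IntervalIntegrable (fun x : ℝ => Real.cos (((a:ℝ)+b)*x))
      MeasureTheory.volume 0 (2*π) :=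
    (Real.continuous_cos.comp (continuous_const.mul continuous_id)).intervalIntegrable _ _
  rw [intervalIntegral.integral_div, intervalIntegral.integral_sub hc1 hc2]
  have h2 : ∫ x in (0:ℝ)..(2*π), Real.cos (((a:ℝ)+b)*x) = 0 := by
    have : ((a:ℝ)+b) = (((a:ℤ)+b : ℤ) : ℝ) := by push_cast; ring
    rw [this]
    exact integral_cos_int_mul _ (by omega)
  rw [h2]
  by_cases hab : a = b
  · subst hab
    simp only [if_pos rfl, sub_self, zero_mul]
    rw [intervalIntegral.integral_congr (fun x _ => Real.cos_zero)]
    rw [intervalIntegral.integral_const]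
    norm_num
  · rw [if_neg hab]
    have : ((a:ℝ)-b) = (((a:ℤ)-b : ℤ) : ℝ) := by push_cast; ring
    rw [this, integral_cos_int_mul _ (by omega)]
    ring

theorem count_small_frequencies_bound :
    ∃ C > (0:ℝ), ∀ (N : ℕ) (lam : Fin N → ℕ), StrictMono lam → (∀ j, 0 < lam j) →
      ∀ S : ℝ, (∀ x ∈ Set.Icc (0:ℝ) (2*π),
          |∑ j, Real.sin ((lam j : ℝ) * x)| ≤ S) →
        ∀ M : ℕ, 0 < M →
          ((Finset.univ.filter (fun j => lam j ≤ M)).card : ℝ) ≤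
            C * S * (1 + Real.log M) := by
  refine ⟨2, by norm_num, ?_⟩
  intro N lam hmono hpos S hS M hM
  set K : ℕ := (Finset.univ.filter (fun j => lam j ≤ M)).card with hK
  have hπ := Real.pi_pos
  have hS0 : 0 ≤ S := by
    have := hS 0 ⟨le_refl 0, by positivity⟩
    simpa using this
  set f : ℝ → ℝ := fun x => ∑ j, Real.sin (lam j * x) with hf
  have hfc : Continuous f :=
    continuous_finset_sum _ (fun j _ =>
      Real.continuous_sin.comp (continuous_const.mul continuous_id))
  have hDc := DK_cont M
  have hsinc : ∀ c : ℝ, Continuous (fun x : ℝ => Real.sin (c * x)) := fun c =>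
    Real.continuous_sin.comp (continuous_const.mul continuous_id)
  have hid : ∫ x in (0:ℝ)..(2*π), f x * DK M x = π * K := by
    have hexp : ∀ x : ℝ, f x * DK M x
        = ∑ j, ∑ k ∈ Finset.Icc 1 M, Real.sin (lam j * x) * Real.sin (k * x) := by
      intro x
      simp only [hf, DK]
      rw [Finset.sum_mul_sum]
    rw [intervalIntegral.integral_congr (fun x _ => hexp x)]
    rw [intervalIntegral.integral_finset_sum (fun j _ =>
      (continuous_finset_sum _ (fun k _ => (hsinc _).mul (hsinc _)) : Continuous (fun x : ℝ =>
        ∑ k ∈ Finset.Icc 1 M, Real.sin (lam j * x) * Real.sin (k * x))).intervalIntegrable _ _)]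
    have inner : ∀ j : Fin N,
        (∫ x in (0:ℝ)..(2*π), ∑ k ∈ Finset.Icc 1 M,
          Real.sin (lam j * x) * Real.sin (k * x)) = if lam j ≤ M then π else 0 := by
      intro j
      rw [intervalIntegral.integral_finset_sum
        (f := fun (k : ℕ) (x : ℝ) => Real.sin (lam j * x) * Real.sin ((k : ℝ) * x)) (fun (k : ℕ) _ =>
        ((hsinc _).mul (hsinc _) : Continuous (fun x : ℝ =>
          Real.sin (lam j * x) * Real.sin ((k : ℝ) * x))).intervalIntegrable _ _)]
      have h1 : 1 ≤ lam j := hpos j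
      rw [Finset.sum_congr rfl (fun k hk => orth (lam j) k h1 (Finset.mem_Icc.mp hk).1)]
      rw [Finset.sum_ite_eq]
      simp [Finset.mem_Icc, h1]
    rw [Finset.sum_congr rfl (fun j _ => inner j), ← Finset.sum_filter,
      Finset.sum_const, nsmul_eq_mul]
    rw [← hK, mul_comm]
  have hb1 : |∫ x in (0:ℝ)..(2*π), f x * DK M x| ≤ S * (2*π*(1+Real.log M)) := by
    have h0 : (0:ℝ) ≤ 2*π := by positivity
    calc |∫ x in (0:ℝ)..(2*π), f x * DK M x|
        ≤ ∫ x in (0:ℝ)..(2*π), |f x * DK M x| :=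
          intervalIntegral.abs_integral_le_integral_abs h0
      _ ≤ ∫ x in (0:ℝ)..(2*π), S * |DK M x| := by
          apply intervalIntegral.integral_mono_on h0
            ((hfc.mul hDc).abs.intervalIntegrable _ _)
            ((continuous_const.mul hDc.abs).intervalIntegrable _ _)
          intro x hx
          show |f x * DK M x| ≤ S * |DK M x|
          rw [abs_mul]
          exact mul_le_mul_of_nonneg_right (hS x hx) (abs_nonneg _)
      _ = S * ∫ x in (0:ℝ)..(2*π), |DK M x| := intervalIntegral.integral_const_mul _ _
      _ ≤ S * (2*π*(1+Real.log M)) := mul_le_mul_of_nonneg_left (DK_L1 M hM) hS0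
  rw [hid] at hb1
  have hle : π * K ≤ S * (2*π*(1+Real.log M)) := (le_abs_self _).trans hb1
  nlinarith [hle, hπ]
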